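/- Let θ ≥ 1, Δ ≥ θ, and 0 ≤ a ≤ Δ − θ. Then Γ(Δ + 1)·Γ(Δ − a) / (Γ(Δ + θ)·Γ(Δ − a − θ + 1)) ≤ 1. -/

import Mathlib

/-- For `θ ≥ 1`, `Δ ≥ θ`, `0 ≤ a ≤ Δ − θ`:
`Γ(Δ+1)·Γ(Δ−a) / (Γ(Δ+θ)·Γ(Δ−a−θ+1)) ≤ 1`. -/
theorem gamma_ratio_le_one_second (θ a Δ : ℝ) (hθ : 1 ≤ θ) (hΔ : θ ≤ Δ)
    (ha0 : 0 ≤ a) (ha : a ≤ Δ - θ) :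
    Real.Gamma (Δ + 1) * Real.Gamma (Δ - a) /
      (Real.Gamma (Δ + θ) * Real.Gamma (Δ - a - θ + 1)) ≤ 1 := by
  have hu : (0:ℝ) < Δ - a - θ + 1 := by linarith
  have hv : (0:ℝ) < Δ - a := by linarith
  have hx : (0:ℝ) < Δ + 1 := by linarith
  have hy : (0:ℝ) < Δ + θ := by linarith
  have Gu := Real.Gamma_pos_of_pos hu
  have Gv := Real.Gamma_pos_of_pos hv
  have Gx := Real.Gamma_pos_of_pos hx
  have Gy := Real.Gamma_pos_of_pos hy
  rw [div_le_one (by positivity)]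
  rcases eq_or_lt_of_le hθ with h1 | h1
  · rw [← h1]; ring_nf; rfl
  -- main case θ > 1
  set f : ℝ → ℝ := Real.log ∘ Real.Gamma with hf
  have hconv : ConvexOn ℝ (Set.Ioi 0) f := Real.convexOn_log_Gamma
  have hmemu : (Δ - a - θ + 1) ∈ Set.Ioi (0:ℝ) := hu
  have hmemv : (Δ - a) ∈ Set.Ioi (0:ℝ) := hv
  have hmemx : (Δ + 1) ∈ Set.Ioi (0:ℝ) := hx
  have hmemy : (Δ + θ) ∈ Set.Ioi (0:ℝ) := hy
  have huv : Δ - a - θ + 1 < Δ - a := by linarith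
  have hxy : Δ + 1 < Δ + θ := by linarith
  have huy : Δ - a - θ + 1 < Δ + θ := by linarith
  have hux : Δ - a - θ + 1 < Δ + 1 := by linarith
  have s1 : (f (Δ - a) - f (Δ - a - θ + 1)) / ((Δ - a) - (Δ - a - θ + 1)) ≤
      (f (Δ + θ) - f (Δ - a - θ + 1)) / ((Δ + θ) - (Δ - a - θ + 1)) :=
    hconv.secant_mono hmemu hmemv hmemy huv.ne' huy.ne' (by linarith)
  have s2 : (f (Δ - a - θ + 1) - f (Δ + θ)) / ((Δ - a - θ + 1) - (Δ + θ)) ≤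
      (f (Δ + 1) - f (Δ + θ)) / ((Δ + 1) - (Δ + θ)) :=
    hconv.secant_mono hmemy hmemu hmemx huy.ne hxy.ne (by linarith)
  have e2 : (f (Δ - a - θ + 1) - f (Δ + θ)) / ((Δ - a - θ + 1) - (Δ + θ)) =
      (f (Δ + θ) - f (Δ - a - θ + 1)) / ((Δ + θ) - (Δ - a - θ + 1)) := by
    rw [← neg_div_neg_eq]; ring_nf
  have e3 : (f (Δ + 1) - f (Δ + θ)) / ((Δ + 1) - (Δ + θ)) =
      (f (Δ + θ) - f (Δ + 1)) / ((Δ + θ) - (Δ + 1)) := by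
    rw [← neg_div_neg_eq]; ring_nf
  rw [e2, e3] at s2
  have key : (f (Δ - a) - f (Δ - a - θ + 1)) / (θ - 1) ≤
      (f (Δ + θ) - f (Δ + 1)) / (θ - 1) := by
    have := s1.trans s2
    refine (le_of_eq ?_).trans (this.trans (le_of_eq ?_)) <;> ring
  have hθ1 : (0:ℝ) < θ - 1 := by linarith
  have key2 : f (Δ - a) - f (Δ - a - θ + 1) ≤ f (Δ + θ) - f (Δ + 1) :=
    (div_le_div_iff_of_pos_right hθ1).mp key
  have logle : Real.log (Real.Gamma (Δ + 1) * Real.Gamma (Δ - a)) ≤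
      Real.log (Real.Gamma (Δ + θ) * Real.Gamma (Δ - a - θ + 1)) := by
    rw [Real.log_mul (ne_of_gt Gx) (ne_of_gt Gv),
      Real.log_mul (ne_of_gt Gy) (ne_of_gt Gu)]
    simp only [hf, Function.comp] at key2
    linarith
  have := Real.exp_le_exp.mpr logle
  rwa [Real.exp_log (by positivity), Real.exp_log (by positivity)] at this
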